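/- arXiv:1210.1982 — 6 statements merged into one kernel-verified Lean document; each statement's English description precedes it below -/
import Mathlib

section
/- Let R be a commutative ring, M a finitely generated R-module with projective resolution ⋯ → P₁ → P₀ → M → 0, and x ∈ R an element such that x · Ext¹_R(M, Ω M) = 0, where Ω M is the first syzygy (the kernel of P₀ → M). Then the pullback N of the surjection P₀ → M along the multiplication map x : M → M is isomorphic to Ω M ⊕ M. -/
open CategoryTheory Opposite Function

universe u

section AuxRes

open Limits CategoryTheory.Projective

noncomputable section

variable {C : Type*} [Category C] [Abelian C] [EnoughProjectives C]
variable {Z P : C} (p : P ⟶ Z) [Projective P] [Epi p]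

/-- Like `ProjectiveResolution.ofComplex`, but starting from an arbitrary epi from a
projective object. -/
def ofEpiComplex : ChainComplex C ℕ :=
  ChainComplex.mk' P (syzygies p) (d p) (fun f => ⟨_, d f, show d f ≫ f = 0 from (Category.assoc (Projective.π _) (kernel.ι f) f).trans (by rw [kernel.condition, Limits.comp_zero]; rfl)⟩)

lemma ofEpiComplex_d_1_0 : (ofEpiComplex p).d 1 0 = d p := by
  simp [ofEpiComplex]

/-- The inductive isomorphism in degree `n + 2`. -/
def ofEpiComplexXIso (n : ℕ) :
    (ofEpiComplex p).X (n + 2) ≅ syzygies ((ofEpiComplex p).d (n + 1) n) :=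
  ChainComplex.mk'XIso _ _ _ _ n

lemma ofEpiComplex_d_succ (n : ℕ) :
    (ofEpiComplex p).d (n + 2) (n + 1) =
      (ofEpiComplexXIso p n).hom ≫ d ((ofEpiComplex p).d (n + 1) n) :=
  ChainComplex.mk'_d _ _ _ _ n

lemma ofEpiComplex_exactAt_succ (n : ℕ) :
    (ofEpiComplex p).ExactAt (n + 1) := by
  rw [HomologicalComplex.exactAt_iff' _ (n + 1 + 1) (n + 1) n (by simp) (by simp)]
  refine (ShortComplex.exact_iff_of_iso ?_).1 (exact_d_f ((ofEpiComplex p).d (n + 1) n))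
  exact ShortComplex.isoMk (ofEpiComplexXIso p n).symm (Iso.refl _) (Iso.refl _)
    (by exact ((Iso.inv_comp_eq _).2 (ofEpiComplex_d_succ p n)).trans (Category.comp_id _).symm)
    (by exact (Category.id_comp _).trans (Category.comp_id _).symm)

instance (n : ℕ) : Projective ((ofEpiComplex p).X n) := by
  obtain (_ | _ | _ | n) := n
  · exact (inferInstance : Projective P)
  all_goals apply Projective.projective_over

lemma ProjectiveResolutionOfEpi_π_f_zero' : ((ChainComplex.toSingle₀Equiv (ofEpiComplex p) Z).symm ⟨p, by
          rw [ofEpiComplex_d_1_0]; exact (Category.assoc (Projective.π _) (kernel.ι p) p).trans (by rw [kernel.condition, Limits.comp_zero]; rfl)⟩).f 0 = p :=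
  ChainComplex.toSingle₀Equiv_symm_apply_f_zero _ _

/-- A projective resolution starting from a chosen epi from a projective object. -/
def ProjectiveResolutionOfEpi : ProjectiveResolution Z where
  complex := ofEpiComplex p
  π := (ChainComplex.toSingle₀Equiv _ _).symm ⟨p, by
          rw [ofEpiComplex_d_1_0]; exact (Category.assoc (Projective.π _) (kernel.ι p) p).trans (by rw [kernel.condition, Limits.comp_zero]; rfl)⟩
  quasiIso := ⟨fun n => by
    cases n
    · rw [ChainComplex.quasiIsoAt₀_iff, ShortComplex.quasiIso_iff_of_zeros']
      · refine (ShortComplex.exact_and_epi_g_iff_of_iso ?_).2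
          ⟨exact_d_f p, by dsimp; infer_instance⟩
        exact ShortComplex.isoMk (Iso.refl _) (Iso.refl _) (Iso.refl _)
          (by exact (Category.id_comp _).trans ((ofEpiComplex_d_1_0 p).symm.trans (Category.comp_id _).symm)) (by exact (Category.id_comp _).trans ((ProjectiveResolutionOfEpi_π_f_zero' p).symm.trans (Category.comp_id _).symm))
      all_goals rfl
    · rw [quasiIsoAt_iff_exactAt']
      · apply ofEpiComplex_exactAt_succ
      · apply ChainComplex.exactAt_succ_single_obj⟩

lemma ProjectiveResolutionOfEpi_π_f_zero : (ProjectiveResolutionOfEpi p).π.f 0 = p := by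
  exact ChainComplex.toSingle₀Equiv_symm_apply_f_zero _ _

end

end AuxRes

section LinearYonedaD

variable {R : Type*} [CommRing R]

lemma linearYonedaObj_d_apply (X : ChainComplex (ModuleCat R) ℕ) (Y : ModuleCat R)
    (i j : ℕ) (f : X.X i ⟶ Y) :
    (X.linearYonedaObj R Y).d i j f = X.d j i ≫ f := rfl

end LinearYonedaD

/-- The key lifting lemma: if `x` kills `Ext¹(M, Ω M)`, then `x • id_M` lifts along `π`. -/
theorem exists_sigma {R : Type u} [CommRing R] (M P₀ : Type u)
    [AddCommGroup M] [Module R M]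
    [AddCommGroup P₀] [Module R P₀] [Module.Projective R P₀]
    (π : P₀ →ₗ[R] M) (hπ : Surjective π) (x : R)
    (hx : ∀ e : ((Ext R (ModuleCat.{u} R) 1).obj
        (op (ModuleCat.of R M))).obj (ModuleCat.of R (LinearMap.ker π)),
      x • e = 0) :
    ∃ σ : M →ₗ[R] P₀, π ∘ₗ σ = x • LinearMap.id := by
  classical
  let Mc : ModuleCat.{u} R := ModuleCat.of R M
  let P : ModuleCat.{u} R := ModuleCat.of R P₀
  let K : ModuleCat.{u} R := ModuleCat.of R (LinearMap.ker π)
  haveI : Projective P := (IsProjective.iff_projective P₀).mp inferInstance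
  let πc : P ⟶ Mc := ModuleCat.ofHom π
  haveI : Epi πc := (ModuleCat.epi_iff_surjective πc).mpr hπ
  let res : ProjectiveResolution Mc := ProjectiveResolutionOfEpi πc
  let T := res.complex.linearYonedaObj R K
  let S' := T.sc' 0 1 2
  let Φ : ((Ext R (ModuleCat.{u} R) 1).obj (op Mc)).obj K ≅ S'.moduleCatLeftHomologyData.H :=
    res.isoExt 1 K ≪≫ T.homologyIsoSc' 0 1 2 (by simp) (by simp) ≪≫ S'.moduleCatHomologyIso
  -- the comparison map δ : X₁ → K, a corestriction of d 1 0
  have hd0 : ∀ y : res.complex.X 1, res.complex.d 1 0 y ∈ LinearMap.ker π := by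
    intro y
    have h0 : res.complex.d 1 0 ≫ πc = 0 := by
      have := res.complex_d_comp_π_f_zero
      rwa [show res.π.f 0 = πc from ProjectiveResolutionOfEpi_π_f_zero πc] at this
    have := congrArg (fun (g : res.complex.X 1 ⟶ Mc) => g y) h0
    exact this
  let δ : res.complex.X 1 ⟶ K :=
    ModuleCat.ofHom (LinearMap.codRestrict (LinearMap.ker π) (res.complex.d 1 0).hom hd0)
  let toKer : K → LinearMap.ker π := fun a => a
  have hδsub : ∀ y, ((toKer (δ y) : LinearMap.ker π) : P₀) = res.complex.d 1 0 y := fun _ => rfl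
  -- δ is surjective
  have hδsurj : ∀ k : LinearMap.ker π, ∃ y, toKer (δ y) = k := by
    intro k
    have hex := res.exact₀
    rw [ShortComplex.moduleCat_exact_iff] at hex
    have hk : res.π.f 0 ((k : LinearMap.ker π) : P₀) = 0 := by
      rw [show res.π.f 0 = πc from ProjectiveResolutionOfEpi_π_f_zero πc]
      exact k.2
    obtain ⟨y, hy⟩ := hex _ hk
    exact ⟨y, Subtype.ext (by rw [hδsub]; exact hy)⟩
  -- δ is a cocycle
  have hδcocycle : S'.g δ = 0 := by
    show T.d 1 2 δ = 0
    rw [linearYonedaObj_d_apply]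
    apply ModuleCat.hom_ext
    apply LinearMap.ext
    intro w
    apply Subtype.ext (p := fun a => a ∈ LinearMap.ker π)
    show ((toKer (δ (res.complex.d 2 1 w)) : LinearMap.ker π) : P₀) = 0
    rw [hδsub]
    have h6 : res.complex.d 2 1 ≫ res.complex.d 1 0 = 0 := res.complex.d_comp_d 2 1 0
    calc res.complex.d 1 0 (res.complex.d 2 1 w)
        = (res.complex.d 2 1 ≫ res.complex.d 1 0) w := rfl
      _ = (0 : res.complex.X 2 ⟶ res.complex.X 0) w := by rw [h6]
      _ = 0 := rfl
  -- its class in Ext is killed by x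
  let z : LinearMap.ker S'.g.hom := ⟨δ, hδcocycle⟩
  have hxz : x • Submodule.Quotient.mk (p := LinearMap.range S'.moduleCatToCycles) z = 0 := by
    have h1 : x • (Φ.inv (Submodule.Quotient.mk z)) = 0 := hx _
    have h2 := congrArg Φ.hom h1
    rw [map_smul, map_zero] at h2
    have h3 : Φ.hom (Φ.inv (Submodule.Quotient.mk z)) = Submodule.Quotient.mk z :=
      ConcreteCategory.congr_hom Φ.inv_hom_id _
    rw [h3] at h2
    exact h2
  rw [← Submodule.Quotient.mk_smul, Submodule.Quotient.mk_eq_zero] at hxz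
  obtain ⟨f, hf⟩ := hxz
  let fm : P ⟶ K := f
  -- fm : P ⟶ K satisfies d 1 0 ≫ fm = x • δ
  have hf' : res.complex.d 1 0 ≫ fm = x • δ := by
    have := congrArg Subtype.val hf
    exact this
  -- hence fm restricted to ker π is x • id
  have hfι : ∀ k : LinearMap.ker π, toKer (fm (k : P₀)) = x • k := by
    intro k
    obtain ⟨y, rfl⟩ := hδsurj k
    rw [hδsub]
    have h3 := congrArg (fun (g : res.complex.X 1 ⟶ K) => toKer (g y)) hf'
    exact h3
  -- construct σ
  let F : P₀ →ₗ[R] LinearMap.ker π :=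
    { toFun := fun a => toKer (fm a)
      map_add' := fun a b => by simp [map_add]; rfl
      map_smul' := fun c a => by simp [map_smul]; rfl }
  let ψ : P₀ →ₗ[R] P₀ := x • LinearMap.id - (LinearMap.ker π).subtype ∘ₗ F
  have hψ : LinearMap.ker π ≤ LinearMap.ker ψ := by
    intro k hk
    have h4 := hfι ⟨k, hk⟩
    simp only [LinearMap.mem_ker, ψ, LinearMap.sub_apply, LinearMap.smul_apply,
      LinearMap.id_apply, LinearMap.comp_apply, Submodule.coe_subtype]
    rw [show F k = toKer (fm k) from rfl, h4]
    simp
  let ψq : (P₀ ⧸ LinearMap.ker π) →ₗ[R] P₀ := Submodule.liftQ _ ψ hψ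
  let e : (P₀ ⧸ LinearMap.ker π) ≃ₗ[R] M := π.quotKerEquivOfSurjective hπ
  refine ⟨ψq ∘ₗ (e.symm : M →ₗ[R] P₀ ⧸ LinearMap.ker π), ?_⟩
  apply LinearMap.ext
  intro m
  obtain ⟨p, rfl⟩ := hπ m
  have he : e.symm (π p) = Submodule.Quotient.mk p := by
    apply e.injective
    rw [LinearEquiv.apply_symm_apply]
    rfl
  simp only [LinearMap.comp_apply, LinearEquiv.coe_coe, he, LinearMap.smul_apply,
    LinearMap.id_apply]
  show π (ψq (Submodule.Quotient.mk p)) = x • π p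
  rw [show ψq (Submodule.Quotient.mk p) = ψ p from rfl]
  have h5 : π ((LinearMap.ker π).subtype (F p)) = 0 := (F p).2
  simp [ψ, LinearMap.sub_apply, h5]

/-- If `x · Ext¹_R(M, Ω M) = 0`, the pullback of the surjection `P₀ → M` along
multiplication by `x` on `M` is isomorphic to `Ω M ⊕ M`. -/
theorem stmt0 {R : Type u} [CommRing R] (M P₀ : Type u)
    [AddCommGroup M] [Module R M] [Module.Finite R M]
    [AddCommGroup P₀] [Module R P₀] [Module.Projective R P₀]
    (π : P₀ →ₗ[R] M) (hπ : Surjective π) (x : R)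
    (hx : ∀ e : ((Ext R (ModuleCat.{u} R) 1).obj
        (op (ModuleCat.of R M))).obj (ModuleCat.of R (LinearMap.ker π)),
      x • e = 0) :
    Nonempty
      ((↥(LinearMap.ker (π.comp (LinearMap.fst R P₀ M) - x • LinearMap.snd R P₀ M)))
        ≃ₗ[R] (↥(LinearMap.ker π) × M)) := by
  obtain ⟨σ, hσ⟩ := exists_sigma M P₀ π hπ x hx
  have hσ' : ∀ m, π (σ m) = x • m := fun m => congrArg (fun g => g m) hσ
  set N := LinearMap.ker (π.comp (LinearMap.fst R P₀ M) - x • LinearMap.snd R P₀ M) with hN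
  have hmem : ∀ q : P₀ × M, q ∈ N ↔ π q.1 = x • q.2 := by
    intro q
    rw [hN, LinearMap.mem_ker]
    simp only [LinearMap.sub_apply, LinearMap.comp_apply, LinearMap.fst_apply,
      LinearMap.smul_apply, LinearMap.snd_apply, sub_eq_zero]
  have key : ∀ n : N, (n : P₀ × M).1 - σ (n : P₀ × M).2 ∈ LinearMap.ker π := by
    intro n
    rw [LinearMap.mem_ker, map_sub, hσ', (hmem _).mp n.2, sub_self]
  let F₁ : N →ₗ[R] (LinearMap.ker π × M) :=
    { toFun := fun n => (⟨(n : P₀ × M).1 - σ (n : P₀ × M).2, key n⟩, (n : P₀ × M).2)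
      map_add' := fun a b => by
        refine Prod.ext (Subtype.ext ?_) rfl
        simp only [Submodule.coe_add, Prod.fst_add, Prod.snd_add, map_add,
          Submodule.coe_add, AddSubmonoid.coe_add]
        abel
      map_smul' := fun c a => by
        refine Prod.ext (Subtype.ext ?_) rfl
        simp [smul_sub] }
  let G₁ : (LinearMap.ker π × M) →ₗ[R] N :=
    { toFun := fun km => ⟨((km.1 : P₀) + σ km.2, km.2), by
        rw [hmem]
        simp [map_add, hσ', LinearMap.mem_ker.mp km.1.2]⟩
      map_add' := fun a b => by
        refine Subtype.ext (Prod.ext ?_ rfl)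
        simp only [Prod.fst_add, Prod.snd_add, Submodule.coe_add, map_add]
        abel
      map_smul' := fun c a => by
        refine Subtype.ext (Prod.ext ?_ rfl)
        simp }
  refine ⟨LinearEquiv.ofLinear F₁ G₁ ?_ ?_⟩
  · apply LinearMap.ext
    intro km
    refine Prod.ext (Subtype.ext ?_) rfl
    show ((km.1 : P₀) + σ km.2) - σ km.2 = (km.1 : P₀)
    abel
  · apply LinearMap.ext
    intro n
    refine Subtype.ext (Prod.ext ?_ rfl)
    show ((n : P₀ × M).1 - σ (n : P₀ × M).2) + σ (n : P₀ × M).2 = (n : P₀ × M).1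
    abel
end

section
/- Let R be a commutative noetherian ring, M a finitely generated R-module, and I an ideal with V(I) containing the nonfree locus of M. Then there exists a positive integer p such that I^p · Ext^i_R(M, N) = 0 for all integers i > 0 and all finitely generated R-modules N. -/
open CategoryTheory Opposite

universe u

namespace ExtAnnihilateAux

section OpLinear

variable {R : Type*} [Ring R] {C : Type*} [Category C] [Preadditive C]
  [CategoryTheory.Linear R C]

noncomputable instance opHomSMul (X Y : Cᵒᵖ) : SMul R (X ⟶ Y) :=
  ⟨fun r f => (r • f.unop).op⟩

@[simp] lemma unop_smul {X Y : Cᵒᵖ} (r : R) (f : X ⟶ Y) :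
    (r • f).unop = r • f.unop := rfl

@[simp] lemma op_smul {X Y : C} (r : R) (f : X ⟶ Y) :
    (r • f).op = r • f.op := rfl

noncomputable instance opHomModule (X Y : Cᵒᵖ) : Module R (X ⟶ Y) :=
  Function.Injective.module R (unopHom X Y)
    (fun _ _ h => Quiver.Hom.unop_inj h) (fun _ _ => rfl)

noncomputable instance opLinear : CategoryTheory.Linear R Cᵒᵖ where
  smul_comp X Y Z r f g := Quiver.Hom.unop_inj
    (by simp [Linear.comp_smul])
  comp_smul X Y Z f r g := Quiver.Hom.unop_inj
    (by simp [Linear.smul_comp])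

noncomputable instance rightOpLinear {D : Type*} [Category D] [Preadditive D]
    [CategoryTheory.Linear R D] (F : Cᵒᵖ ⥤ D) [F.Additive] [F.Linear R] :
    Functor.Linear R F.rightOp where
  map_smul {X X'} f r := by
    dsimp [Functor.rightOp]
    rw [F.map_smul]
    rfl

lemma homologyMap_smul {ι : Type*} {c : ComplexShape ι}
    {K L : HomologicalComplex C c} (f : K ⟶ L) (i : ι)
    [K.HasHomology i] [L.HasHomology i] (r : R) :
    HomologicalComplex.homologyMap (r • f) i = r • HomologicalComplex.homologyMap f i := by
  dsimp [HomologicalComplex.homologyMap]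
  have : (HomologicalComplex.shortComplexFunctor C c i).map (r • f) =
      r • (HomologicalComplex.shortComplexFunctor C c i).map f := by
    ext <;> rfl
  rw [this, ShortComplex.homologyMap_smul]
  rfl

noncomputable instance homologyFunctorLinear {ι : Type*} (c : ComplexShape ι)
    [CategoryWithHomology C] (i : ι) :
    Functor.Linear R (HomologicalComplex.homologyFunctor C c i) where
  map_smul f r := homologyMap_smul f i r

end OpLinear

section YonedaLinear

variable {R : Type*} [CommRing R] {C : Type*} [Category C] [Preadditive C]
  [CategoryTheory.Linear R C]

noncomputable instance linearYonedaObjLinear (Y : C) :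
    Functor.Linear R ((linearYoneda R C).obj Y) where
  map_smul {X X'} f r := by
    ext g
    exact Linear.smul_comp (X := X'.unop) (Y := X.unop) (Z := Y) r f.unop g

end YonedaLinear

section ExtSmul

variable {R : Type u} [CommRing R]

/-- The first-variable functoriality of `Ext` applied to `r • 𝟙 X` is scalar
multiplication by `r`. -/
lemma ext_map_smul_apply (n : ℕ) (X Y : ModuleCat.{u} R) (r : R)
    (e : ((Ext R (ModuleCat.{u} R) n).obj (op X)).obj Y) :
    ((Ext R (ModuleCat.{u} R) n).map ((r • 𝟙 X).op)).app Y e = r • e := by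
  let P : ProjectiveResolution X := ProjectiveResolution.of X
  let F := ((linearYoneda R (ModuleCat.{u} R)).obj Y).rightOp
  haveI hFlin : Functor.Linear R F :=
    inferInstanceAs (Functor.Linear R ((linearYoneda R (ModuleCat.{u} R)).obj Y).rightOp)
  haveI : Functor.Linear R (F.mapHomologicalComplex (ComplexShape.down ℕ)) :=
    CategoryTheory.Functor.mapHomologicalComplex_linear F _
  have w : (r • 𝟙 P.complex) ≫ P.π =
      P.π ≫ (ChainComplex.single₀ (ModuleCat.{u} R)).map (r • 𝟙 X) := by
    refine HomologicalComplex.hom_ext _ _ (fun j => ?_)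
    cases j with
    | zero =>
      simp [Linear.comp_smul, Linear.smul_comp]
      exact (Linear.comp_smul (X := P.complex.X 0) (Y := X) (Z := X) (P.π.f 0) r (𝟙 X)).trans
        (congrArg (fun x => r • x) (Category.comp_id _)) |>.symm
    | succ j =>
      apply (HomologicalComplex.isZero_single_obj_X
        (ComplexShape.down ℕ) 0 X (j + 1) (by simp)).eq_of_tgt
  have key := F.leftDerived_map_eq n (r • 𝟙 X) (P := P) (Q := P) (r • 𝟙 P.complex) w
  have hmid : (F.mapHomologicalComplex (ComplexShape.down ℕ) ⋙
      HomologicalComplex.homologyFunctor _ _ n).map (r • 𝟙 P.complex) =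
      r • 𝟙 ((F.mapHomologicalComplex (ComplexShape.down ℕ) ⋙
        HomologicalComplex.homologyFunctor _ _ n).obj P.complex) := by
    rw [Functor.map_smul, CategoryTheory.Functor.map_id]
  have main : (F.leftDerived n).map (r • 𝟙 X) = r • 𝟙 ((F.leftDerived n).obj X) := by
    rw [key, hmid]
    dsimp only [Functor.comp_obj]
    simp only [Linear.smul_comp, Linear.comp_smul, Category.id_comp, Iso.hom_inv_id]
  show ((F.leftDerived n).map (r • 𝟙 X)).unop e = r • e
  rw [main]
  rfl

end ExtSmul

end ExtAnnihilateAux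

open ExtAnnihilateAux

/-- If the nonfree locus of a finitely generated module `M` over a noetherian ring is
contained in `V(I)`, then some power `I^k` annihilates `Ext^i_R(M, N)` for all `i > 0`
and all finitely generated `N`. -/
theorem stmt3 {R : Type u} [CommRing R] [IsNoetherianRing R]
    (M : Type u) [AddCommGroup M] [Module R M] [Module.Finite R M]
    (I : Ideal R)
    (h : ∀ (p : Ideal R) [p.IsPrime],
      ¬ Module.Free (Localization.AtPrime p) (LocalizedModule p.primeCompl M) → I ≤ p) :
    ∃ k : ℕ, 0 < k ∧ ∀ i : ℕ, 0 < i →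
      ∀ (N : Type u) [AddCommGroup N] [Module R N], Module.Finite R N →
      ∀ r ∈ I ^ k,
      ∀ e : ((Ext R (ModuleCat.{u} R) i).obj (op (ModuleCat.of R M))).obj (ModuleCat.of R N),
        r • e = 0 := by
  classical
  obtain ⟨m, π, hπ⟩ := Module.Finite.exists_fin' R M
  haveI : Module.FinitePresentation R M := Module.finitePresentation_of_finite R M
  set Φ : (M →ₗ[R] (Fin m → R)) →ₗ[R] (M →ₗ[R] M) := LinearMap.llcomp R M (Fin m → R) M π
    with hΦ
  set q : Ideal R := Submodule.comap
    (LinearMap.toSpanSingleton R (M →ₗ[R] M) LinearMap.id) (LinearMap.range Φ) with hqdef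
  have hq : ∀ (p : Ideal R), p.IsPrime → q ≤ p → I ≤ p := by
    intro p hp hqp
    by_cases hfree : Module.Free (Localization.AtPrime p) (LocalizedModule p.primeCompl M)
    · exfalso
      set S := p.primeCompl with hS
      set π' := LocalizedModule.map S π with hπ'def
      have hπ' : Function.Surjective π' := LocalizedModule.map_surjective S π hπ
      haveI : Module.Projective (Localization.AtPrime p) (LocalizedModule S M) :=
        Module.Projective.of_free
      obtain ⟨σ, hσ⟩ := Module.projective_lifting_property π' LinearMap.id hπ'
      set g₀ : M →ₗ[R] LocalizedModule S (Fin m → R) :=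
        (σ.restrictScalars R) ∘ₗ (LocalizedModule.mkLinearMap S M) with hg₀
      obtain ⟨h₀, s, hs⟩ := Module.FinitePresentation.exists_lift_of_isLocalizedModule S
        (LocalizedModule.mkLinearMap S (Fin m → R)) g₀
      have hcomp : (LocalizedModule.mkLinearMap S M) ∘ₗ (π ∘ₗ h₀) =
          (LocalizedModule.mkLinearMap S M) ∘ₗ ((s : R) • (LinearMap.id : M →ₗ[R] M)) := by
        ext x
        have h1 : LocalizedModule.mkLinearMap S M (π (h₀ x)) =
            π' (LocalizedModule.mkLinearMap S (Fin m → R) (h₀ x)) := by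
          simp [hπ'def]
        have h2 : LocalizedModule.mkLinearMap S (Fin m → R) (h₀ x) = (s : R) • g₀ x := by
          have := LinearMap.congr_fun hs x
          simpa [Submonoid.smul_def] using this
        have h3 : π' (g₀ x) = LocalizedModule.mkLinearMap S M x := by
          have := LinearMap.congr_fun hσ ((LocalizedModule.mkLinearMap S M) x)
          simpa [hg₀] using this
        simp only [LinearMap.coe_comp, Function.comp_apply, LinearMap.smul_apply,
          LinearMap.id_coe, id_eq, map_smul]
        rw [h1, h2, LinearMap.map_smul_of_tower, h3]
      obtain ⟨t, ht⟩ := Module.Finite.exists_smul_of_comp_eq_of_isLocalizedModule S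
        (LocalizedModule.mkLinearMap S M) _ _ hcomp
      have hmem : ((t : R) * (s : R)) ∈ q := by
        have key2 : (t : R) • (π ∘ₗ h₀) = ((t : R) * (s : R)) • (LinearMap.id (M := M)) := by
          ext x
          have := LinearMap.congr_fun ht x
          simpa [Submonoid.smul_def, mul_smul] using this
        have hmem' : LinearMap.toSpanSingleton R (M →ₗ[R] M) LinearMap.id ((t : R) * (s : R)) ∈
            LinearMap.range Φ := by
          refine ⟨(t : R) • h₀, ?_⟩
          rw [map_smul]
          have hΦh : Φ h₀ = π ∘ₗ h₀ := rfl
          rw [hΦh, key2, LinearMap.toSpanSingleton_apply]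
        simpa [hqdef, Submodule.mem_comap] using hmem'
      have : ((t : R) * (s : R)) ∈ p := hqp hmem
      exact (t * s).2 this
    · exact h p hfree
  have hIrad : I ≤ q.radical := by
    rw [Ideal.radical_eq_sInf]
    exact le_sInf fun p hp => hq p hp.2 hp.1
  obtain ⟨k₀, hk₀⟩ := Ideal.exists_pow_le_of_le_radical_of_fg hIrad (IsNoetherian.noetherian _)
  refine ⟨k₀ + 1, Nat.succ_pos _, ?_⟩
  intro i hi N _ _ hN r hr
  have hrq : r ∈ q := hk₀ (Ideal.pow_le_pow_right (Nat.le_succ k₀) hr)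
  obtain ⟨g, hg⟩ := hrq
  obtain ⟨j, rfl⟩ : ∃ j, i = j + 1 := ⟨i - 1, (Nat.succ_pred_eq_of_pos hi).symm⟩
  set X := ModuleCat.of R M
  set NN := ModuleCat.of R N
  set FF := ModuleCat.of R (Fin m → R)
  intro e
  have hfac : (r • 𝟙 X : X ⟶ X) = ModuleCat.ofHom g ≫ ModuleCat.ofHom π := by
    ext x
    have := LinearMap.congr_fun hg x
    simp only [hΦ, LinearMap.llcomp_apply, LinearMap.toSpanSingleton_apply,
      LinearMap.smul_apply, LinearMap.id_coe, id_eq] at this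
    simpa using this.symm
  have h0 : ((Ext R (ModuleCat.{u} R) (j + 1)).map ((r • 𝟙 X).op)).app NN e = 0 := by
    haveI : Projective FF := ModuleCat.projective_of_free (Pi.basisFun R (Fin m))
    rw [hfac, op_comp, Functor.map_comp]
    have hz : Limits.IsZero (((Ext R (ModuleCat.{u} R) (j + 1)).obj (op FF)).obj NN) :=
      isZero_Ext_succ_of_projective FF NN j
    have hid : (𝟙 (((Ext R (ModuleCat.{u} R) (j + 1)).obj (op FF)).obj NN)) = 0 :=
      hz.eq_of_src _ _
    have hx : ∀ x : (((Ext R (ModuleCat.{u} R) (j + 1)).obj (op FF)).obj NN), x = 0 := by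
      intro x
      have : (𝟙 (((Ext R (ModuleCat.{u} R) (j + 1)).obj (op FF)).obj NN)) x
          = (0 : (((Ext R (ModuleCat.{u} R) (j + 1)).obj (op FF)).obj NN) ⟶
              (((Ext R (ModuleCat.{u} R) (j + 1)).obj (op FF)).obj NN)) x := by rw [hid]
      simpa using this
    simp only [NatTrans.comp_app, ConcreteCategory.comp_apply, Function.comp_apply]
    rw [hx ((((Ext R (ModuleCat.{u} R) (j + 1)).map ((ModuleCat.ofHom π).op)).app NN) e),
      map_zero]
  have hfin := ext_map_smul_apply (j + 1) X NN r e
  rw [h0] at hfin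
  exact hfin.symm
end

section
/- Let R be a commutative noetherian ring, M a finitely generated R-module, and x₁, …, xₙ elements of R such that the nonfree locus of M is contained in V(x₁, …, xₙ). Then there exists a positive integer k such that for all i > 0 and all finitely generated R-modules N, each element x_j^k annihilates Ext^i_R(M, N). -/
open CategoryTheory Opposite Limits

universe u

noncomputable section

namespace StmtAux

variable {R : Type u} [CommRing R]

variable {R : Type u} [CommRing R]

instance opLinear : CategoryTheory.Linear R (ModuleCat.{u} R)ᵒᵖ where
  homModule X Y :=
    { smul := fun r f => (r • f.unop).op
      one_smul := fun f => Quiver.Hom.unop_inj (one_smul R f.unop)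
      mul_smul := fun r s f => Quiver.Hom.unop_inj (mul_smul r s f.unop)
      smul_zero := fun r => Quiver.Hom.unop_inj (smul_zero r)
      smul_add := fun r f g => Quiver.Hom.unop_inj (smul_add r f.unop g.unop)
      add_smul := fun r s f => Quiver.Hom.unop_inj (add_smul r s f.unop)
      zero_smul := fun f => Quiver.Hom.unop_inj (zero_smul R f.unop) }
  smul_comp _ _ _ _ _ _ := Quiver.Hom.unop_inj (CategoryTheory.Linear.comp_smul _ _ _ _ _ _)
  comp_smul _ _ _ _ _ _ := Quiver.Hom.unop_inj (CategoryTheory.Linear.smul_comp _ _ _ _ _ _)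

@[simp] lemma unop_smul {X Y : (ModuleCat.{u} R)ᵒᵖ} (r : R) (f : X ⟶ Y) :
    (r • f).unop = r • f.unop := rfl

@[simp] lemma op_smul {X Y : ModuleCat.{u} R} (r : R) (f : X ⟶ Y) :
    (r • f).op = r • f.op := rfl

lemma homologyMap_smul {C : Type*} [Category C] [Preadditive C] [CategoryTheory.Linear R C]
    {ι : Type*} {c : ComplexShape ι} {K L : HomologicalComplex C c} (f : K ⟶ L) (r : R)
    (i : ι) [K.HasHomology i] [L.HasHomology i] :
    HomologicalComplex.homologyMap (r • f) i = r • HomologicalComplex.homologyMap f i := by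
  dsimp only [HomologicalComplex.homologyMap]
  have : (HomologicalComplex.shortComplexFunctor C c i).map (r • f)
      = r • (HomologicalComplex.shortComplexFunctor C c i).map f := rfl
  rw [this, ShortComplex.homologyMap_smul]
  rfl

lemma single_map_smul {C : Type*} [Category C] [Preadditive C] [CategoryTheory.Linear R C]
    [Limits.HasZeroObject C] (r : R) {A B : C} (f : A ⟶ B) :
    (ChainComplex.single₀ C).map (r • f) = r • (ChainComplex.single₀ C).map f := by
  ext
  simp
  rfl

lemma ext_annihilate {M N F : ModuleCat.{u} R} [Projective F]
    (r : R) (f : M ⟶ F) (g : F ⟶ M) (hfg : f ≫ g = r • 𝟙 M)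
    (n : ℕ) (e : ((Ext R (ModuleCat.{u} R) (n + 1)).obj (op M)).obj N) :
    r • e = 0 := by
  let C := ModuleCat.{u} R
  let G : C ⥤ Cᵒᵖ := ((linearYoneda R C).obj N).rightOp
  let P : ProjectiveResolution M := (HasProjectiveResolution.out (Z := M)).some
  let Q : ProjectiveResolution F := ProjectiveResolution.self F
  let lf : P.complex ⟶ Q.complex := ProjectiveResolution.lift f P Q
  let lg : Q.complex ⟶ P.complex := ProjectiveResolution.lift g Q P
  have comm1 : (r • 𝟙 P.complex) ≫ P.π = P.π ≫ (ChainComplex.single₀ C).map (r • 𝟙 M) := by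
    rw [show (ChainComplex.single₀ C).map (r • 𝟙 M) = r • (ChainComplex.single₀ C).map (𝟙 M)
      from single_map_smul r (𝟙 M), CategoryTheory.Linear.smul_comp, CategoryTheory.Linear.comp_smul]
    simp
    rfl
  have comm2 : (lf ≫ lg) ≫ P.π = P.π ≫ (ChainComplex.single₀ C).map (r • 𝟙 M) := by
    rw [← hfg]
    simp [lf, lg, Category.assoc, ← Functor.map_comp]
    rfl
  have H : Homotopy (r • 𝟙 P.complex) (lf ≫ lg) :=
    ProjectiveResolution.liftHomotopy (r • 𝟙 M) _ _ comm1 comm2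
  have H2 : Homotopy ((G.mapHomologicalComplex _).map (r • 𝟙 P.complex))
      ((G.mapHomologicalComplex _).map (lf ≫ lg)) := Functor.mapHomotopy _ H
  have hEq := H2.homologyMap_eq (n + 1)
  -- LHS computation
  set W := (G.mapHomologicalComplex _).obj P.complex with hW
  have hsm : (G.mapHomologicalComplex _).map (r • 𝟙 P.complex) = r • 𝟙 W := by
    apply HomologicalComplex.hom_ext
    intro j
    apply Quiver.Hom.unop_inj
    apply ModuleCat.hom_ext
    apply LinearMap.ext
    intro u
    change (r • 𝟙 (P.complex.X j)) ≫ (show P.complex.X j ⟶ N from u) = _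
    rw [CategoryTheory.Linear.smul_comp]
    simp
    rfl
  -- RHS is zero
  have hzero : IsZero (((G.mapHomologicalComplex _).obj Q.complex).homology (n + 1)) := by
    rw [← HomologicalComplex.exactAt_iff_isZero_homology, HomologicalComplex.exactAt_iff]
    apply ShortComplex.exact_of_isZero_X₂
    show IsZero (G.obj (Q.complex.X (n + 1)))
    apply Functor.map_isZero
    exact HomologicalComplex.isZero_single_obj_X (ComplexShape.down ℕ) 0 F (n + 1) (by simp)
  have hR : HomologicalComplex.homologyMap ((G.mapHomologicalComplex _).map (lf ≫ lg)) (n + 1)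
      = 0 := by
    rw [Functor.map_comp, HomologicalComplex.homologyMap_comp]
    rw [hzero.eq_of_tgt (HomologicalComplex.homologyMap
      ((G.mapHomologicalComplex _).map lf) (n + 1)) 0]
    simp
  have hkey : r • (𝟙 (W.homology (n + 1))) = 0 := by
    rw [← HomologicalComplex.homologyMap_id, ← homologyMap_smul, ← hsm, hEq, hR]
  -- transport along the iso with the left derived functor
  let X : Cᵒᵖ := (G.leftDerived (n + 1)).obj M
  let A : X ≅ W.homology (n + 1) := P.isoLeftDerivedObj G (n + 1)
  have hX : r • 𝟙 X = 0 := by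
    have : r • 𝟙 X = A.hom ≫ (r • 𝟙 (W.homology (n + 1))) ≫ A.inv := by
      rw [CategoryTheory.Linear.smul_comp, Category.id_comp, CategoryTheory.Linear.comp_smul,
        A.hom_inv_id]
    rw [this, hkey, zero_comp, comp_zero]
  have hunop : (r • 𝟙 (unop X) : unop X ⟶ unop X) = 0 := by
    have := congrArg Quiver.Hom.unop hX
    exact this
  have happ : (r • 𝟙 (unop X) : unop X ⟶ unop X) e = r • e := rfl
  rw [← happ, hunop]
  rfl



variable (R) in
/-- The ideal of `r : R` such that `r • id_M` factors through a free module. -/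
def factorIdeal (M : Type u) [AddCommGroup M] [Module R M] : Ideal R where
  carrier := {r | ∃ (ι : Type u) (f : M →ₗ[R] (ι →₀ R)) (g : (ι →₀ R) →ₗ[R] M),
    g ∘ₗ f = r • LinearMap.id}
  zero_mem' := ⟨PEmpty.{u+1}, 0, 0, by ext m; simp⟩
  add_mem' := by
    rintro a b ⟨ι₁, f₁, g₁, h₁⟩ ⟨ι₂, f₂, g₂, h₂⟩
    refine ⟨ι₁ ⊕ ι₂,
      (Finsupp.sumFinsuppLEquivProdFinsupp R).symm.toLinearMap ∘ₗ (f₁.prod f₂),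
      (g₁ ∘ₗ (LinearMap.fst R _ _) + g₂ ∘ₗ (LinearMap.snd R _ _)) ∘ₗ
        (Finsupp.sumFinsuppLEquivProdFinsupp R).toLinearMap, ?_⟩
    ext m
    have h₁' := LinearMap.congr_fun h₁ m
    have h₂' := LinearMap.congr_fun h₂ m
    simp only [LinearMap.comp_apply, LinearMap.smul_apply, LinearMap.id_apply] at h₁' h₂' ⊢
    rw [LinearEquiv.coe_toLinearMap, LinearEquiv.coe_toLinearMap, LinearEquiv.apply_symm_apply]
    simp only [LinearMap.add_apply, LinearMap.comp_apply, LinearMap.fst_apply,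
      LinearMap.snd_apply, LinearMap.prod_apply, Function.prod]
    rw [h₁', h₂', add_smul]
  smul_mem' := by
    rintro c r ⟨ι, f, g, h⟩
    refine ⟨ι, f, c • g, ?_⟩
    ext m
    have := LinearMap.congr_fun h m
    simp only [LinearMap.comp_apply, LinearMap.smul_apply, LinearMap.id_apply] at this ⊢
    rw [this, smul_smul, smul_eq_mul]


lemma exists_primeCompl_mem_factorIdeal [IsNoetherianRing R]
    (M : Type u) [AddCommGroup M] [Module R M] [Module.Finite R M]
    (p : Ideal R) [p.IsPrime]
    (hfree : Module.Free (Localization.AtPrime p) (LocalizedModule p.primeCompl M)) :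
    ∃ r ∈ p.primeCompl, r ∈ factorIdeal R M := by
  have fp : Module.FinitePresentation R M := Module.finitePresentation_of_finite R M
  set S := p.primeCompl
  let Rp := Localization.AtPrime p
  let Mp := LocalizedModule S M
  let mk : M →ₗ[R] Mp := LocalizedModule.mkLinearMap S M
  have : Module.Finite Rp Mp := Module.Finite.of_isLocalizedModule S mk
  let ι := Module.Free.ChooseBasisIndex Rp Mp
  let b : Module.Basis ι Rp Mp := Module.Free.chooseBasis Rp Mp
  let g0 : (ι →₀ R) →ₗ[R] (ι →₀ Rp) := Finsupp.mapRange.linearMap (Algebra.linearMap R Rp)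
  have hg0 : IsLocalizedModule S g0 := inferInstance
  let α : (ι →₀ R) →ₗ[R] Mp :=
    ((b.repr.symm.restrictScalars R) : (ι →₀ Rp) ≃ₗ[R] Mp).toLinearMap ∘ₗ g0
  have hα : IsLocalizedModule S α :=
    IsLocalizedModule.of_linearEquiv S g0 ((b.repr.symm.restrictScalars R))
  obtain ⟨f₁, s₁, hf₁⟩ := Module.FinitePresentation.exists_lift_of_isLocalizedModule S α mk
  obtain ⟨g₁, s₂, hg₁⟩ := Module.FinitePresentation.exists_lift_of_isLocalizedModule S mk α
  have hcomp : mk ∘ₗ (g₁ ∘ₗ f₁) = mk ∘ₗ (((s₁ : R) * (s₂ : R)) • LinearMap.id) := by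
    ext m
    have h1 := LinearMap.congr_fun hf₁ m
    simp only [LinearMap.comp_apply, LinearMap.smul_apply, LinearMap.id_apply] at h1 ⊢
    have h2 := LinearMap.congr_fun hg₁ (f₁ m)
    simp only [LinearMap.comp_apply, LinearMap.smul_apply] at h2
    rw [h2, h1, map_smul]
    simp only [Submonoid.smul_def, smul_smul]
    rw [mul_comm (s₂ : R) (s₁ : R)]
  obtain ⟨s₃, hs₃⟩ := Module.Finite.exists_smul_of_comp_eq_of_isLocalizedModule S mk
    (g₁ ∘ₗ f₁) (((s₁ : R) * (s₂ : R)) • LinearMap.id) hcomp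
  refine ⟨(s₃ : R) * ((s₁ : R) * (s₂ : R)), mul_mem s₃.2 (mul_mem s₁.2 s₂.2), ι, f₁,
    (s₃ : R) • g₁, ?_⟩
  ext m
  have := LinearMap.congr_fun hs₃ m
  simp only [LinearMap.comp_apply, LinearMap.smul_apply, LinearMap.id_apply,
    Submonoid.smul_def] at this ⊢
  rw [this, smul_smul]

end StmtAux

end

open CategoryTheory Opposite

/-- If the nonfree locus of a finitely generated module `M` over a noetherian ring is
contained in `V(x₁, …, xₙ)`, then there is `k > 0` such that each `x_j^k` annihilates
`Ext^i_R(M, N)` for all `i > 0` and all finitely generated `N`. -/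
theorem stmt4 {R : Type u} [CommRing R] [IsNoetherianRing R]
    (M : Type u) [AddCommGroup M] [Module R M] [Module.Finite R M]
    {n : ℕ} (x : Fin n → R)
    (h : ∀ (p : Ideal R) [p.IsPrime],
      ¬ Module.Free (Localization.AtPrime p) (LocalizedModule p.primeCompl M) →
      ∀ j : Fin n, x j ∈ p) :
    ∃ k : ℕ, 0 < k ∧ ∀ i : ℕ, 0 < i →
      ∀ (N : Type u) [AddCommGroup N] [Module R N], Module.Finite R N →
      ∀ j : Fin n,
      ∀ e : ((Ext R (ModuleCat.{u} R) i).obj (op (ModuleCat.of R M))).obj (ModuleCat.of R N),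
        (x j ^ k) • e = 0 := by
  classical
  have hrad : ∀ j, x j ∈ (StmtAux.factorIdeal R M).radical := by
    intro j
    rw [Ideal.radical_eq_sInf]
    apply Submodule.mem_sInf.mpr
    rintro q ⟨hq1, hq2⟩
    haveI := hq2
    by_cases hfree : Module.Free (Localization.AtPrime q)
      (LocalizedModule (Ideal.primeCompl q) M)
    · obtain ⟨r, hr, hrJ⟩ := StmtAux.exists_primeCompl_mem_factorIdeal M q hfree
      exact absurd (hq1 hrJ) hr
    · exact h q hfree j
  choose k0 hk0 using fun j => (Ideal.mem_radical_iff.mp (hrad j))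
  refine ⟨(Finset.univ.sup k0) + 1, Nat.succ_pos _, ?_⟩
  set K := (Finset.univ.sup k0) + 1 with hK
  intro i hi N _ _ _ j e
  have hxk : x j ^ K ∈ StmtAux.factorIdeal R M := by
    have hle : k0 j ≤ K := le_trans (Finset.le_sup (Finset.mem_univ j)) (Nat.le_succ _)
    have hsplit : x j ^ K = x j ^ (K - k0 j) * x j ^ (k0 j) := by
      rw [← pow_add, Nat.sub_add_cancel hle]
    rw [hsplit]
    exact Ideal.mul_mem_left _ _ (hk0 j)
  obtain ⟨ι, f, g, hfg⟩ := hxk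
  obtain ⟨m, rfl⟩ := Nat.exists_eq_succ_of_ne_zero hi.ne'
  haveI : Projective (ModuleCat.of R (ι →₀ R)) :=
    ModuleCat.projective_of_free (M := ModuleCat.of R (ι →₀ R)) Finsupp.basisSingleOne
  exact StmtAux.ext_annihilate (M := ModuleCat.of R M) (N := ModuleCat.of R N)
    (F := ModuleCat.of R (ι →₀ R)) (x j ^ K) (ModuleCat.ofHom f) (ModuleCat.ofHom g) (ModuleCat.hom_ext hfg) m e
end

section
/- Let R be a commutative ring, M a finitely generated R-module, and x ∈ R a nonzerodivisor on M such that x · Ext¹_R(M, Ω M) = 0. Then the first syzygy of M/xM is isomorphic (up to projective direct summands) to M ⊕ Ω M, where Ω M is the first syzygy of M. -/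
open CategoryTheory Opposite Function Limits

universe u

private theorem aux_final {R : Type u} [CommRing R] (M P₀ : Type u)
    [AddCommGroup M] [Module R M] [Module.Finite R M]
    [AddCommGroup P₀] [Module R P₀] [Module.Projective R P₀] [Module.Finite R P₀]
    (π : P₀ →ₗ[R] M) (hπ : Surjective π) (x : R)
    (hreg : Injective (LinearMap.lsmul R M x))
    (t : M →ₗ[R] P₀) (ht : ∀ m, π (t m) = x • m) :
    ∃ (Q Q₁ Q₂ : ModuleCat.{u} R), Module.Projective R Q ∧ Module.Finite R Q ∧
      Module.Projective R Q₁ ∧ Module.Finite R Q₁ ∧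
      Module.Projective R Q₂ ∧ Module.Finite R Q₂ ∧
      ∃ ρ : Q →ₗ[R] (M ⧸ LinearMap.range (LinearMap.lsmul R M x)), Surjective ρ ∧
        Nonempty ((↥(LinearMap.ker ρ) × Q₁) ≃ₗ[R] ((M × ↥(LinearMap.ker π)) × Q₂)) := by
  classical
  refine ⟨ModuleCat.of R P₀, ModuleCat.of R PUnit.{u+1}, ModuleCat.of R PUnit.{u+1},
    ‹Module.Projective R P₀›, ‹Module.Finite R P₀›, inferInstance, inferInstance,
    inferInstance, inferInstance, ?_⟩
  set N := LinearMap.range (LinearMap.lsmul R M x) with hN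
  refine ⟨N.mkQ.comp π, (Submodule.mkQ_surjective N).comp hπ, ?_⟩
  set ρ := N.mkQ.comp π with hρ
  -- the linear map M × ker π → ker ρ
  have hmem : ∀ p : M × LinearMap.ker π, t p.1 + (p.2 : P₀) ∈ LinearMap.ker ρ := by
    intro ⟨m, k⟩
    have : ρ (t m + (k : P₀)) = Submodule.Quotient.mk (x • m) := by
      simp [hρ, map_add, ht, k.2]
    rw [LinearMap.mem_ker, this, Submodule.Quotient.mk_eq_zero]
    exact ⟨m, rfl⟩
  let ψ : (M × LinearMap.ker π) →ₗ[R] P₀ :=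
    t.comp (LinearMap.fst R M _) + (LinearMap.ker π).subtype.comp (LinearMap.snd R M _)
  have hψ : ∀ p : M × LinearMap.ker π, ψ p = t p.1 + (p.2 : P₀) := fun p => rfl
  let φ : (M × LinearMap.ker π) →ₗ[R] LinearMap.ker ρ :=
    ψ.codRestrict _ (fun p => by rw [hψ]; exact hmem p)
  have hφval : ∀ p, (φ p : P₀) = t p.1 + (p.2 : P₀) := fun p => rfl
  have hinj : Injective φ := by
    intro ⟨m, k⟩ ⟨m', k'⟩ h
    have h1 : t m + (k : P₀) = t m' + (k' : P₀) := by
      rw [← hφval ⟨m, k⟩, ← hφval ⟨m', k'⟩, h]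
    have h2 : x • m = x • m' := by
      have := congrArg π h1
      simpa [map_add, ht, k.2, k'.2] using this
    have hm : m = m' := hreg (by simpa using h2)
    subst hm
    have : (k : P₀) = (k' : P₀) := by
      have := add_left_cancel h1
      exact this
    exact Prod.ext rfl (Subtype.ext this)
  have hsurj : Surjective φ := by
    rintro ⟨p, hp⟩
    have hpN : π p ∈ N := by
      have : N.mkQ (π p) = 0 := hp
      rwa [Submodule.mkQ_apply, Submodule.Quotient.mk_eq_zero] at this
    obtain ⟨m, hm⟩ := hpN
    have hmx : x • m = π p := by simpa using hm
    have hk : p - t m ∈ LinearMap.ker π := by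
      simp [LinearMap.mem_ker, map_sub, ht, hmx]
    refine ⟨⟨m, ⟨p - t m, hk⟩⟩, ?_⟩
    apply Subtype.ext
    rw [hφval]
    simp
  let e := (LinearEquiv.ofBijective φ ⟨hinj, hsurj⟩).symm
  exact ⟨(e.prodCongr (LinearEquiv.refl R PUnit.{u+1}))⟩


private theorem aux_getlift {R : Type u} [CommRing R] (M P₀ : Type u)
    [AddCommGroup M] [Module R M]
    [AddCommGroup P₀] [Module R P₀] [Module.Projective R P₀]
    (π : P₀ →ₗ[R] M) (hπ : Surjective π) (x : R)
    (hx : ∀ e : ((Ext R (ModuleCat.{u} R) 1).obj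
        (op (ModuleCat.of R M))).obj (ModuleCat.of R (LinearMap.ker π)),
      x • e = 0) :
    ∃ t : M →ₗ[R] P₀, ∀ m, π (t m) = x • m := by
  let 𝕄 := ModuleCat.of R M
  let 𝕂 := ModuleCat.of R (LinearMap.ker π)
  let Pc := ModuleCat.of R P₀
  let π' : Pc ⟶ 𝕄 := ModuleCat.ofHom π
  haveI : Epi π' := (ModuleCat.epi_iff_surjective π').2 hπ
  haveI : Projective Pc := (IsProjective.iff_projective P₀).1 ‹_›
  let P : ProjectiveResolution 𝕄 := ProjectiveResolution.of 𝕄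
  let α : P.complex.X 0 ⟶ Pc := Projective.factorThru (X := 𝕄) (P.π.f 0) π'
  have hα : α ≫ π' = P.π.f 0 := Projective.factorThru_comp (X := 𝕄) _ _
  have hd : P.complex.d 1 0 ≫ P.π.f 0 = 0 := P.complex_d_comp_π_f_zero
  have hmemg : ∀ y : P.complex.X 1, ((P.complex.d 1 0 ≫ α) y : P₀) ∈ LinearMap.ker π := by
    intro y
    have : ((P.complex.d 1 0 ≫ α ≫ π') y : M) = 0 := by
      rw [hα]; exact (congrArg (fun f => (ConcreteCategory.hom f) y) hd).trans rfl
    exact this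
  let g : P.complex.X 1 ⟶ 𝕂 := ModuleCat.ofHom (
    LinearMap.codRestrict (LinearMap.ker π)
      ((P.complex.d 1 0 ≫ α : P.complex.X 1 ⟶ Pc).hom : P.complex.X 1 →ₗ[R] P₀) hmemg)
  let ι : 𝕂 ⟶ Pc := ModuleCat.ofHom (LinearMap.ker π).subtype
  haveI : Mono ι := (ModuleCat.mono_iff_injective ι).2 Subtype.val_injective
  have hgι : g ≫ ι = P.complex.d 1 0 ≫ α := rfl
  have hcoc : P.complex.d 2 1 ≫ g = 0 := by
    rw [← cancel_mono ι, Category.assoc, hgι, zero_comp, ← Category.assoc,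
      P.complex.d_comp_d, zero_comp]
  -- the cochain complex Hom(P_•, 𝕂)
  let C := P.complex.linearYonedaObj R 𝕂
  let S' := C.sc' 0 1 2
  have hS'f : S'.f = C.d 0 1 := rfl
  have hS'g : S'.g = C.d 1 2 := rfl
  have hgker : S'.g g = 0 := by
    show (C.d 1 2) g = 0
    rw [ChainComplex.linearYonedaObj_d]
    show P.complex.d 2 1 ≫ g = 0
    exact hcoc
  let z : LinearMap.ker S'.g.hom := ⟨g, hgker⟩
  let i1 : C.sc 1 ≅ S' := C.isoSc' 0 1 2 (CochainComplex.prev_nat_succ 0) (CochainComplex.next ℕ 1)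
  let i2 : C.homology 1 ≅ S'.homology := ShortComplex.homologyMapIso i1
  let E := (P.isoExt 1 𝕂) ≪≫ i2 ≪≫ S'.moduleCatHomologyIso
  let e := E.inv (S'.moduleCatLeftHomologyData.π z)
  have hxe : x • e = 0 := hx e
  have h1 : S'.moduleCatLeftHomologyData.π (x • z) = 0 := by
    have : E.hom (x • e) = x • E.hom e := map_smul (E.hom.hom : _ →ₗ[R] _) x e
    rw [hxe, map_zero] at this
    have h2 : E.hom e = S'.moduleCatLeftHomologyData.π z := by
      show (E.inv ≫ E.hom) (S'.moduleCatLeftHomologyData.π z) = _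
      rw [Iso.inv_hom_id]
      rfl
    rw [h2] at this
    exact (map_smul S'.moduleCatLeftHomologyData.π.hom x z).trans this.symm
  have h3 : x • z ∈ LinearMap.range S'.moduleCatToCycles := by
    rw [← Submodule.Quotient.mk_eq_zero]
    exact h1
  obtain ⟨h₀, hh₀⟩ := h3
  have hfh : P.complex.d 1 0 ≫ (h₀ : P.complex.X 0 ⟶ 𝕂) ≫ ι = x • (P.complex.d 1 0 ≫ α) := by
    have hval : S'.f h₀ = x • g := congrArg Subtype.val hh₀
    have : (C.d 0 1) h₀ = x • g := hval
    rw [ChainComplex.linearYonedaObj_d] at this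
    have h4 : P.complex.d 1 0 ≫ h₀ = x • g := this
    exact (Category.assoc _ _ _).symm.trans ((congrArg (· ≫ ι) h4).trans (by rw [Linear.smul_comp, hgι]))
  let β : P.complex.X 0 ⟶ Pc := x • α - h₀ ≫ ι
  have hβ : P.complex.d 1 0 ≫ β = 0 := by
    show P.complex.d 1 0 ≫ (x • α - h₀ ≫ ι) = 0
    rw [Preadditive.comp_sub, Linear.comp_smul, hfh, sub_self]
  let t' : 𝕄 ⟶ Pc := P.exact₀.desc β hβ
  have ht' : P.π.f 0 ≫ t' = β := P.exact₀.g_desc β hβ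
  have hιπ : ι ≫ π' = 0 := by
    ext k
    exact k.2
  have hβπ : β ≫ π' = P.π.f 0 ≫ (x • 𝟙 𝕄) := by
    show (x • α - h₀ ≫ ι) ≫ π' = P.π.f 0 ≫ (x • 𝟙 𝕄)
    rw [Preadditive.sub_comp, Linear.smul_comp, Category.assoc h₀ ι π', hιπ, comp_zero (f := h₀),
      sub_zero]
    exact (congrArg (x • ·) (hα.trans (Category.comp_id _).symm)).trans
      (Linear.comp_smul _ _ _ (P.π.f 0) x (𝟙 𝕄)).symm
  have htπ : t' ≫ π' = x • 𝟙 𝕄 := by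
    exact (cancel_epi (P.π.f 0)).1 ((Category.assoc _ _ _).symm.trans ((congrArg (· ≫ π') ht').trans hβπ))
  refine ⟨t'.hom, fun m => ?_⟩
  have := LinearMap.congr_fun (congrArg ModuleCat.Hom.hom htπ) m
  simpa [π'] using this

/-- If `x` is a nonzerodivisor on `M` and `x · Ext¹_R(M, Ω M) = 0`, then the first syzygy
of `M/xM` is isomorphic to `M ⊕ Ω M` up to projective direct summands. -/
theorem stmt5 {R : Type u} [CommRing R] (M P₀ : Type u)
    [AddCommGroup M] [Module R M] [Module.Finite R M]
    [AddCommGroup P₀] [Module R P₀] [Module.Projective R P₀] [Module.Finite R P₀]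
    (π : P₀ →ₗ[R] M) (hπ : Surjective π) (x : R)
    (hreg : Injective (LinearMap.lsmul R M x))
    (hx : ∀ e : ((Ext R (ModuleCat.{u} R) 1).obj
        (op (ModuleCat.of R M))).obj (ModuleCat.of R (LinearMap.ker π)),
      x • e = 0) :
    ∃ (Q Q₁ Q₂ : ModuleCat.{u} R), Module.Projective R Q ∧ Module.Finite R Q ∧
      Module.Projective R Q₁ ∧ Module.Finite R Q₁ ∧
      Module.Projective R Q₂ ∧ Module.Finite R Q₂ ∧
      ∃ ρ : Q →ₗ[R] (M ⧸ LinearMap.range (LinearMap.lsmul R M x)), Surjective ρ ∧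
        Nonempty ((↥(LinearMap.ker ρ) × Q₁) ≃ₗ[R] ((M × ↥(LinearMap.ker π)) × Q₂)) := by
  obtain ⟨t, ht⟩ := aux_getlift M P₀ π hπ x hx
  exact aux_final M P₀ π hπ x hreg t ht
end

section
/- Let R be a commutative noetherian ring and Φ a specialization-closed subset of Spec R. Then the union of the nonfree loci of the modules in mod^Φ(R) equals Φ ∩ S(R), where S(R) is the set of primes p such that R_p is not a field. -/
universe u

/-- For a specialization-closed `Φ ⊆ Spec R`, the union of the nonfree loci of the modules
in `mod^Φ(R)` equals `Φ ∩ S(R)`, where `S(R)` is the set of primes `p` with `R_p` not a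
field. -/
theorem stmt11 {R : Type u} [CommRing R] [IsNoetherianRing R]
    (Φ : Set (PrimeSpectrum R))
    (hΦ : ∀ p q : PrimeSpectrum R, p ∈ Φ → p.asIdeal ≤ q.asIdeal → q ∈ Φ) :
    { p : PrimeSpectrum R | ∃ M : ModuleCat.{u} R, Module.Finite R M ∧
        (∀ q : PrimeSpectrum R, q ∉ Φ →
          Module.Free (Localization.AtPrime q.asIdeal)
            (LocalizedModule q.asIdeal.primeCompl M)) ∧
        ¬ Module.Free (Localization.AtPrime p.asIdeal)
            (LocalizedModule p.asIdeal.primeCompl M) }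
      = Φ ∩ { p : PrimeSpectrum R | ¬ IsField (Localization.AtPrime p.asIdeal) } := by
  ext p
  constructor
  · rintro ⟨M, hfin, hfree, hnfree⟩
    constructor
    · by_contra hp
      exact hnfree (hfree p hp)
    · intro hf
      letI : Field (Localization.AtPrime p.asIdeal) := hf.toField
      exact hnfree (Module.Free.of_divisionRing _ _)
  · rintro ⟨hp, hfield⟩
    refine ⟨ModuleCat.of R (R ⧸ p.asIdeal), (inferInstance : Module.Finite R (R ⧸ p.asIdeal)), ?_, ?_⟩
    · intro q hq
      have hnle : ¬ p.asIdeal ≤ q.asIdeal := fun h => hq (hΦ p q hp h)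
      obtain ⟨x, hxp, hxq⟩ := SetLike.not_le_iff_exists.mp hnle
      have hx0 : ∀ z : R ⧸ p.asIdeal, x • z = 0 := by
        intro z
        rw [Algebra.smul_def, Ideal.Quotient.algebraMap_eq,
          Ideal.Quotient.eq_zero_iff_mem.mpr hxp, zero_mul]
      have : Subsingleton (LocalizedModule q.asIdeal.primeCompl (R ⧸ p.asIdeal)) := by
        refine subsingleton_of_forall_eq 0 fun z => ?_
        induction z using LocalizedModule.induction_on with
        | h m s =>
          rw [← LocalizedModule.zero_mk (1 : q.asIdeal.primeCompl), LocalizedModule.mk_eq]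
          exact ⟨⟨x, hxq⟩, by simp [Submonoid.smul_def, smul_comm x, hx0]⟩
      exact Module.Free.of_subsingleton (Localization.AtPrime q.asIdeal)
        (LocalizedModule q.asIdeal.primeCompl (R ⧸ p.asIdeal))
    · intro hFree'
      haveI hFree : Module.Free (Localization.AtPrime p.asIdeal)
          (LocalizedModule p.asIdeal.primeCompl (R ⧸ p.asIdeal)) := hFree'
      have hnt : Nontrivial (LocalizedModule p.asIdeal.primeCompl (R ⧸ p.asIdeal)) := by
        refine ⟨LocalizedModule.mk 1 1, 0, fun h => ?_⟩
        rw [← LocalizedModule.zero_mk (1 : p.asIdeal.primeCompl), LocalizedModule.mk_eq] at h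
        obtain ⟨u, hu⟩ := h
        simp only [one_smul, smul_zero, Submonoid.smul_def] at hu
        have : (u : R) • (1 : R ⧸ p.asIdeal) = 0 := hu
        rw [Algebra.smul_def, Ideal.Quotient.algebraMap_eq, mul_one] at this
        exact u.2 (Ideal.Quotient.eq_zero_iff_mem.mp this)
      have hxz : ∀ x ∈ IsLocalRing.maximalIdeal (Localization.AtPrime p.asIdeal),
          ∀ z : LocalizedModule p.asIdeal.primeCompl (R ⧸ p.asIdeal), x • z = 0 := by
        intro x hx z
        obtain ⟨⟨a, s⟩, rfl⟩ := IsLocalization.mk'_surjective p.asIdeal.primeCompl x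
        dsimp only at hx ⊢
        have ha : a ∈ p.asIdeal :=
          (IsLocalization.AtPrime.mk'_mem_maximal_iff _ p.asIdeal a s).mp hx
        induction z using LocalizedModule.induction_on with
        | h m t =>
          rw [← Localization.mk_eq_mk', LocalizedModule.mk_smul_mk]
          have : a • m = 0 := by
            rw [Algebra.smul_def, Ideal.Quotient.algebraMap_eq,
              Ideal.Quotient.eq_zero_iff_mem.mpr ha, zero_mul]
          rw [this, LocalizedModule.zero_mk]
      have hbot : IsLocalRing.maximalIdeal (Localization.AtPrime p.asIdeal) = ⊥ := by
        refine le_bot_iff.mp fun x hx => ?_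
        let b := Module.Free.chooseBasis (Localization.AtPrime p.asIdeal)
          (LocalizedModule p.asIdeal.primeCompl (R ⧸ p.asIdeal))
        obtain ⟨i⟩ := b.index_nonempty
        have h1 : x • b i = 0 := hxz x hx _
        have h2 := congrArg (fun v => b.repr v i) h1
        simpa [Module.Basis.repr_self] using h2
      exact hfield (IsLocalRing.isField_iff_maximalIdeal_eq.mpr hbot)
end

section
/- Let R be a commutative noetherian ring, M a finitely generated R-module, and x ∈ R an element with x · Ext¹_R(M, Ω M) = 0. Then the Koszul complex K(x, M) = (0 → M →^x M → 0) is quasi-isomorphic to the complex (0 → Ω M ⊕ M → P₀ → 0), where P₀ → M is a surjection from a finitely generated projective module with kernel Ω M. In particular, H₀(x, M) = M/xM and H₁(x, M) = {m ∈ M : x m = 0} fit into an exact sequence 0 → H₁(x, M) → Ω M ⊕ M → P₀ → H₀(x, M) → 0. -/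
open CategoryTheory Limits Opposite Function

universe u

private lemma exists_lift_smul {R : Type u} [CommRing R] {M P₀ : Type u}
    [AddCommGroup M] [Module R M]
    [AddCommGroup P₀] [Module R P₀] [Module.Projective R P₀]
    (π : P₀ →ₗ[R] M) (hπ : Surjective π) (x : R)
    (hx : ∀ e : ((Ext R (ModuleCat.{u} R) 1).obj
        (op (ModuleCat.of R M))).obj (ModuleCat.of R (LinearMap.ker π)),
      x • e = 0) :
    ∃ σ : M →ₗ[R] P₀, ∀ m : M, π (σ m) = x • m := by
  classical
  let Z : ModuleCat.{u} R := ModuleCat.of R M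
  let Kmod : ModuleCat.{u} R := ModuleCat.of R (LinearMap.ker π)
  let Pm : ModuleCat.{u} R := ModuleCat.of R P₀
  let πh : Pm ⟶ Z := ModuleCat.ofHom π
  have hπepi : Epi πh := (ModuleCat.epi_iff_surjective _).2 hπ
  let Q : ProjectiveResolution Z := ProjectiveResolution.of Z
  let q : Q.complex.X 0 ⟶ Z := Q.π.f 0
  let d1 : Q.complex.X 1 ⟶ Q.complex.X 0 := Q.complex.d 1 0
  let α : Q.complex.X 0 ⟶ Pm := Projective.factorThru q πh
  have hα : α ≫ πh = q := Projective.factorThru_comp _ _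
  have hmem : ∀ u : Q.complex.X 1, (d1 ≫ α) u ∈ LinearMap.ker π := by
    intro u
    have h1 : (α ≫ πh) (d1 u) = q (d1 u) := by rw [hα]
    have h2 : (d1 ≫ q) u = 0 := by rw [show d1 ≫ q = 0 from Q.complex_d_comp_π_f_zero]; rfl
    exact LinearMap.mem_ker.2 (h1.trans h2)
  let ρ : Q.complex.X 1 ⟶ Kmod := ModuleCat.ofHom (LinearMap.codRestrict (LinearMap.ker π) (d1 ≫ α).hom hmem)
  let ι : Kmod ⟶ Pm := ModuleCat.ofHom (LinearMap.ker π).subtype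
  have hρι : ρ ≫ ι = d1 ≫ α := rfl
  let HC := Q.complex.linearYonedaObj R Kmod
  have hd : ∀ (i j : ℕ) (φ : Q.complex.X i ⟶ Kmod),
      (HC.d i j) φ = Q.complex.d j i ≫ φ := by
    intro i j φ
    rfl
  let S := HC.sc' 0 1 2
  have hprev : (ComplexShape.up ℕ).prev 1 = 0 := by simp
  have hnext : (ComplexShape.up ℕ).next 1 = 2 := by simp
  let Φ : (((Ext R (ModuleCat.{u} R) 1).obj (op Z)).obj Kmod : Type u) ≃ₗ[R]
      (S.moduleCatLeftHomologyData.H : Type u) :=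
    ((Q.isoExt 1 Kmod) ≪≫ HC.homologyIsoSc' 0 1 2 hprev hnext ≪≫
      S.moduleCatHomologyIso).toLinearEquiv
  have htor : ∀ h : (S.moduleCatLeftHomologyData.H : Type u), x • h = 0 := by
    intro h
    have h1 : h = Φ (Φ.symm h) := (Φ.apply_symm_apply h).symm
    rw [h1, ← map_smul, hx (Φ.symm h), map_zero]
  have hmono : Mono ι := (ModuleCat.mono_iff_injective ι).2 (Submodule.injective_subtype _)
  have hcoc : Q.complex.d 2 1 ≫ ρ = 0 := by
    rw [← cancel_mono ι, Category.assoc, hρι, ← Category.assoc, zero_comp]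
    rw [show Q.complex.d 2 1 ≫ d1 = 0 from Q.complex.d_comp_d 2 1 0, zero_comp]
  have hρ2 : ρ ∈ LinearMap.ker S.g.hom := by
    show (HC.d 1 2) ρ = 0
    rw [hd 1 2 ρ]
    exact hcoc
  have h0 : x • (S.moduleCatLeftHomologyData.π ⟨ρ, hρ2⟩) = 0 := htor _
  replace h0 : S.moduleCatLeftHomologyData.π (x • (⟨ρ, hρ2⟩ : LinearMap.ker S.g.hom)) = 0 :=
    (map_smul (S.moduleCatLeftHomologyData.π).hom x _).trans h0
  have h2 : x • (⟨ρ, hρ2⟩ : LinearMap.ker S.g.hom) ∈ LinearMap.range S.moduleCatToCycles := by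
    exact (Submodule.Quotient.mk_eq_zero _).1 h0
  obtain ⟨γ₀, hγ⟩ := h2
  let γ : Q.complex.X 0 ⟶ Kmod := γ₀
  have hγ1 : S.f γ₀ = x • ρ := congrArg Subtype.val hγ
  have hγ2 : d1 ≫ γ = x • ρ := by rw [← hd 0 1 γ]; exact hγ1
  let β : Q.complex.X 0 ⟶ Pm := x • α - γ ≫ ι
  have hβd : d1 ≫ β = 0 := by
    rw [Preadditive.comp_sub, Linear.comp_smul, ← hρι, ← Category.assoc, hγ2,
      Linear.smul_comp, sub_self]
  have hrk := Q.exact₀.moduleCat_range_eq_ker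
  let qL : Q.complex.X 0 →ₗ[R] M := q.hom
  have hqsurj : Surjective qL := by
    have h7 : Epi (Q.π.f 0) := inferInstance
    exact (ModuleCat.epi_iff_surjective q).1 h7
  have hle : LinearMap.ker qL ≤ LinearMap.ker (β.hom : Q.complex.X 0 →ₗ[R] P₀) := by
    intro z hz
    have hz' : z ∈ LinearMap.range d1.hom := by rw [hrk]; exact hz
    obtain ⟨u, hu⟩ := hz'
    have : β.hom (d1.hom u) = (d1 ≫ β) u := rfl
    rw [LinearMap.mem_ker, ← hu, this, hβd]
    rfl
  let e := qL.quotKerEquivOfSurjective hqsurj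
  let σ : M →ₗ[R] P₀ := ((LinearMap.ker qL).liftQ (β.hom : Q.complex.X 0 →ₗ[R] P₀) hle) ∘ₗ
    (e.symm : M →ₗ[R] _)
  refine ⟨σ, ?_⟩
  intro m
  obtain ⟨z, rfl⟩ := hqsurj m
  have he : e.symm (qL z) = Submodule.Quotient.mk z := by
    apply e.injective
    rw [e.apply_symm_apply]
    rfl
  have hσz : σ (qL z) = β z := by
    show ((LinearMap.ker qL).liftQ (β.hom : Q.complex.X 0 →ₗ[R] P₀) hle) (e.symm (qL z)) = β z
    rw [he]
    rfl
  have hβz : β z = x • α z - ι (γ z) := rfl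
  have h5 : π (α z) = qL z := by
    have := LinearMap.congr_fun (congrArg ModuleCat.Hom.hom hα) z
    exact this
  have h6 : π (ι (γ z)) = 0 := (γ z).2
  rw [hσz, hβz, map_sub, map_smul, h5, h6, sub_zero]

/-- If `x · Ext¹_R(M, Ω M) = 0`, the Koszul complex `K(x, M) = (0 → M →ˣ M → 0)` is
quasi-isomorphic to `(0 → Ω M ⊕ M → P₀ → 0)`: there is a linear map
`f : Ω M ⊕ M → P₀` whose kernel is isomorphic to `H₁(x, M) = {m | xm = 0}` and whose
cokernel is isomorphic to `H₀(x, M) = M/xM`; i.e. there is an exact sequence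
`0 → H₁(x, M) → Ω M ⊕ M → P₀ → H₀(x, M) → 0`. -/
theorem stmt13 {R : Type u} [CommRing R] [IsNoetherianRing R] (M P₀ : Type u)
    [AddCommGroup M] [Module R M] [Module.Finite R M]
    [AddCommGroup P₀] [Module R P₀] [Module.Projective R P₀] [Module.Finite R P₀]
    (π : P₀ →ₗ[R] M) (hπ : Surjective π) (x : R)
    (hx : ∀ e : ((Ext R (ModuleCat.{u} R) 1).obj
        (op (ModuleCat.of R M))).obj (ModuleCat.of R (LinearMap.ker π)),
      x • e = 0) :
    ∃ f : (↥(LinearMap.ker π) × M) →ₗ[R] P₀,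
      Nonempty ((↥(LinearMap.ker f)) ≃ₗ[R] ↥(LinearMap.ker (LinearMap.lsmul R M x))) ∧
      Nonempty ((P₀ ⧸ LinearMap.range f)
        ≃ₗ[R] (M ⧸ LinearMap.range (LinearMap.lsmul R M x))) := by
  classical
  obtain ⟨σ, hσ⟩ := exists_lift_smul π hπ x hx
  let f : (↥(LinearMap.ker π) × M) →ₗ[R] P₀ :=
    (LinearMap.ker π).subtype.comp (LinearMap.fst R _ M) + σ.comp (LinearMap.snd R _ M)
  have hf : ∀ (w : LinearMap.ker π) (m : M), f (w, m) = (w : P₀) + σ m := fun w m => rfl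
  refine ⟨f, ⟨?_⟩, ⟨?_⟩⟩
  · -- kernel
    have h1 : ∀ p ∈ LinearMap.ker f, (LinearMap.snd R (↥(LinearMap.ker π)) M) p ∈
        LinearMap.ker (LinearMap.lsmul R M x) := by
      rintro ⟨w, m⟩ hp
      have hfp : (w : P₀) + σ m = 0 := hp
      have : π ((w : P₀) + σ m) = 0 := by rw [hfp, map_zero]
      rw [map_add, w.2, zero_add, hσ] at this
      simpa [LinearMap.mem_ker] using this
    have hker : ∀ m : M, x • m = 0 → -σ m ∈ LinearMap.ker π := by
      intro m hm
      rw [LinearMap.mem_ker, map_neg, hσ, hm, neg_zero]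
    have hker2 : ∀ (m : ↥(LinearMap.ker (LinearMap.lsmul R M x))),
        ((⟨-σ m.1, hker m.1 m.2⟩, m.1) : ↥(LinearMap.ker π) × M) ∈ LinearMap.ker f := by
      intro m
      rw [LinearMap.mem_ker, hf]
      simp
    let g1 : ↥(LinearMap.ker f) →ₗ[R] ↥(LinearMap.ker (LinearMap.lsmul R M x)) :=
      (LinearMap.snd R _ M).restrict h1
    let g2 : ↥(LinearMap.ker (LinearMap.lsmul R M x)) →ₗ[R] ↥(LinearMap.ker f) :=
      { toFun := fun m => ⟨(⟨-σ m.1, hker m.1 m.2⟩, m.1), hker2 m⟩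
        map_add' := by
          intro a b
          apply Subtype.ext
          apply Prod.ext
          · apply Subtype.ext
            simp
            abel
          · rfl
        map_smul' := by
          intro r a
          apply Subtype.ext
          apply Prod.ext
          · apply Subtype.ext
            simp
          · rfl }
    refine LinearEquiv.ofLinear g1 g2 ?_ ?_
    · ext m
      rfl
    · ext p
      · -- first component in P₀
        have hfp : (p.1.1 : P₀) + σ p.1.2 = 0 := p.2
        have h9 : (p.1.1 : P₀) = -σ p.1.2 := by rwa [add_eq_zero_iff_eq_neg] at hfp
        exact h9.symm
      · rfl
  · -- cokernel
    have hsub : LinearMap.range f ≤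
        Submodule.comap π (LinearMap.range (LinearMap.lsmul R M x)) := by
      rintro p ⟨⟨w, m⟩, rfl⟩
      have hw : π (w : P₀) = 0 := w.2
      rw [hf, Submodule.mem_comap, map_add, hw, zero_add, hσ]
      exact ⟨m, rfl⟩
    let F := Submodule.mapQ (LinearMap.range f) (LinearMap.range (LinearMap.lsmul R M x)) π hsub
    have hsurj : Surjective F := by
      intro c
      obtain ⟨m, rfl⟩ := Submodule.Quotient.mk_surjective _ c
      obtain ⟨p, rfl⟩ := hπ m
      exact ⟨Submodule.Quotient.mk p, by rw [Submodule.mapQ_apply]⟩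
    have hinj : Injective F := by
      rw [← LinearMap.ker_eq_bot, LinearMap.ker_eq_bot']
      intro a ha
      obtain ⟨p, rfl⟩ := Submodule.Quotient.mk_surjective _ a
      rw [Submodule.mapQ_apply, Submodule.Quotient.mk_eq_zero] at ha
      obtain ⟨m, hm⟩ := ha
      have hm' : x • m = π p := hm
      rw [Submodule.Quotient.mk_eq_zero]
      refine ⟨(⟨p - σ m, by rw [LinearMap.mem_ker, map_sub, hσ, hm', sub_self]⟩, m), ?_⟩
      rw [hf]
      show p - σ m + σ m = p
      abel
    exact LinearEquiv.ofBijective F ⟨hinj, hsurj⟩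
end
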